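/- For the uncontrolled Michaelis–Menten–Henri system ż_s = -z_s + (z_s + 0.5) z_f, ε ż_f = z_s - (z_s + 1) z_f with ε > 0, the nonnegative quadrant {(z_s, z_f) : z_s ≥ 0, 0 ≤ z_f ≤ 1} is positively invariant under the flow. -/

import Mathlib

open Filter Topology Set

lemma left_min_deriv_nonpos {f : ℝ → ℝ} {a b d : ℝ} (hb : b < a)
    (hf : HasDerivAt f d a) (hmin : ∀ s, b < s → s < a → f a ≤ f s) : d ≤ 0 := by
  have H : Tendsto (slope f a) (𝓝[≠] a) (𝓝 d) := hasDerivAt_iff_tendsto_slope.mp hf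
  have H2 : Tendsto (slope f a) (𝓝[<] a) (𝓝 d) :=
    H.mono_left (nhdsWithin_mono _ (fun x hx => ne_of_lt hx))
  refine le_of_tendsto H2 ?_
  filter_upwards [Ioo_mem_nhdsLT_of_mem ⟨hb, le_rfl⟩] with s hs
  have h1 : 0 ≤ f s - f a := sub_nonneg.2 (hmin s hs.1 hs.2)
  have h2 : s - a < 0 := sub_neg.2 hs.2
  have : (f s - f a) / (s - a) ≤ 0 := div_nonpos_of_nonneg_of_nonpos h1 h2.le
  simpa [slope_def_field, div_eq_iff] using this

/-- For the uncontrolled MMH system, the region {z_s ≥ 0, 0 ≤ z_f ≤ 1} is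
positively invariant. -/
theorem mmh_positively_invariant
    (ε T : ℝ) (hε : 0 < ε) (hT : 0 ≤ T) (z_s z_f : ℝ → ℝ)
    (hzs : ∀ t ∈ Set.Icc (0 : ℝ) T,
      HasDerivAt z_s (-z_s t + (z_s t + 0.5) * z_f t) t)
    (hzf : ∀ t ∈ Set.Icc (0 : ℝ) T,
      HasDerivAt z_f ((1 / ε) * (z_s t - (z_s t + 1) * z_f t)) t)
    (h0 : 0 ≤ z_s 0) (h1 : 0 ≤ z_f 0) (h2 : z_f 0 ≤ 1) :
    ∀ t ∈ Set.Icc (0 : ℝ) T, 0 ≤ z_s t ∧ 0 ≤ z_f t ∧ z_f t ≤ 1 := by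
  have hm : 0 < min ε (1/2 : ℝ) := lt_min hε (by norm_num)
  have hexpT : (0:ℝ) < Real.exp T := Real.exp_pos T
  -- key barrier lemma
  have key : ∀ δ : ℝ, 0 < δ → δ * Real.exp T < min ε (1/2) →
      ∀ t ∈ Set.Icc (0:ℝ) T,
        (-(δ * Real.exp t) < z_s t ∧ -(δ * Real.exp t) < z_f t ∧
          z_f t < 1 + δ * Real.exp t) := by
    intro δ hδ hδT
    set P : ℝ → Prop := fun t => -(δ * Real.exp t) < z_s t ∧ -(δ * Real.exp t) < z_f t ∧
      z_f t < 1 + δ * Real.exp t with hP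
    -- bound facts: for t ∈ [0,T], E t := δ * exp t satisfies 0 < E t, E t ≤ 1/2, E t < ε
    have hEb : ∀ t, t ≤ T → δ * Real.exp t < min ε (1/2) := by
      intro t ht
      have : δ * Real.exp t ≤ δ * Real.exp T :=
        mul_le_mul_of_nonneg_left (Real.exp_le_exp.2 ht) hδ.le
      linarith
    have hP0 : P 0 := by
      have h : (0:ℝ) < δ * Real.exp 0 := by positivity
      refine ⟨by linarith, by linarith, by linarith⟩
    set S : Set ℝ := {t | t ∈ Set.Icc (0:ℝ) T ∧ ∀ s ∈ Set.Icc (0:ℝ) t, P s} with hS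
    have hS0 : (0:ℝ) ∈ S := by
      refine ⟨⟨le_refl 0, hT⟩, ?_⟩
      intro s hs
      have : s = 0 := le_antisymm hs.2 hs.1
      rwa [this]
    have hSne : S.Nonempty := ⟨0, hS0⟩
    have hSbdd : BddAbove S := ⟨T, fun x hx => hx.1.2⟩
    set c := sSup S with hc
    have h0c : 0 ≤ c := le_csSup hSbdd hS0
    have hcT : c ≤ T := csSup_le hSne (fun x hx => hx.1.2)
    have hcIcc : c ∈ Set.Icc (0:ℝ) T := ⟨h0c, hcT⟩
    have hlt : ∀ s, 0 ≤ s → s < c → P s := by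
      intro s hs0 hsc
      obtain ⟨u, huS, hsu⟩ := exists_lt_of_lt_csSup hSne hsc
      exact huS.2 s ⟨hs0, hsu.le⟩
    -- P holds at c
    have hPc : P c := by
      rcases eq_or_lt_of_le h0c with h0c' | h0c'
    -- case c = 0
      · rw [← h0c']; exact hP0
      -- case 0 < c : first non-strict inequalities at c by taking limits from the left
      have memIoo : Set.Ioo 0 c ∈ 𝓝[<] c := Ioo_mem_nhdsLT_of_mem ⟨h0c', le_rfl⟩
      have ctzs : ContinuousAt z_s c := (hzs c hcIcc).continuousAt
      have ctzf : ContinuousAt z_f c := (hzf c hcIcc).continuousAt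
      have ctE : ContinuousAt (fun s => δ * Real.exp s) c :=
        (Real.continuous_exp.continuousAt).const_smul δ
      have ns1 : -(δ * Real.exp c) ≤ z_s c := by
        have tend : Tendsto (fun s => z_s s + δ * Real.exp s) (𝓝[<] c)
            (𝓝 (z_s c + δ * Real.exp c)) :=
          ((ctzs.add ctE).tendsto).mono_left nhdsWithin_le_nhds
        have h : (0:ℝ) ≤ z_s c + δ * Real.exp c := ge_of_tendsto tend (by
          filter_upwards [memIoo] with s hs
          have := (hlt s hs.1.le hs.2).1
          linarith)
        linarith
      have ns2 : -(δ * Real.exp c) ≤ z_f c := by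
        have tend : Tendsto (fun s => z_f s + δ * Real.exp s) (𝓝[<] c)
            (𝓝 (z_f c + δ * Real.exp c)) :=
          ((ctzf.add ctE).tendsto).mono_left nhdsWithin_le_nhds
        have h : (0:ℝ) ≤ z_f c + δ * Real.exp c := ge_of_tendsto tend (by
          filter_upwards [memIoo] with s hs
          have := (hlt s hs.1.le hs.2).2.1
          linarith)
        linarith
      have ns3 : z_f c ≤ 1 + δ * Real.exp c := by
        have tend : Tendsto (fun s => 1 + δ * Real.exp s - z_f s) (𝓝[<] c)
            (𝓝 (1 + δ * Real.exp c - z_f c)) := by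
          have : ContinuousAt (fun s => 1 + δ * Real.exp s - z_f s) c :=
            ((continuousAt_const.add ctE).sub ctzf)
          exact this.tendsto.mono_left nhdsWithin_le_nhds
        have h : (0:ℝ) ≤ 1 + δ * Real.exp c - z_f c := ge_of_tendsto tend (by
          filter_upwards [memIoo] with s hs
          have := (hlt s hs.1.le hs.2).2.2
          linarith)
        linarith
      have hEc : 0 < δ * Real.exp c := by positivity
      have hEc2 : δ * Real.exp c < min ε (1/2) := hEb c hcT
      have hEhalf : δ * Real.exp c ≤ 1/2 := by
        have := min_le_right ε (1/2 : ℝ); linarith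
      have hEε : δ * Real.exp c < ε := by
        have := min_le_left ε (1/2 : ℝ); linarith
      -- strictness, each via the left-minimum lemma
      have s1 : -(δ * Real.exp c) < z_s c := by
        rcases lt_or_eq_of_le ns1 with h | h
        · exact h
        exfalso
        have hder : HasDerivAt (fun s => z_s s + δ * Real.exp s)
            ((-z_s c + (z_s c + 0.5) * z_f c) + δ * Real.exp c) c :=
          (hzs c hcIcc).add ((Real.hasDerivAt_exp c).const_mul δ)
        have hd := left_min_deriv_nonpos h0c' hder (by
          intro s hs0 hsc
          have := (hlt s hs0.le hsc).1
          have hfc : z_s c + δ * Real.exp c = 0 := by linarith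
          simp only [hfc]; linarith)
        set E := δ * Real.exp c with hE
        have hzc : z_s c = -E := by linarith
        nlinarith [mul_nonneg (by linarith : (0:ℝ) ≤ 0.5 - E) (by linarith : (0:ℝ) ≤ z_f c + E)]
      have s2 : -(δ * Real.exp c) < z_f c := by
        rcases lt_or_eq_of_le ns2 with h | h
        · exact h
        exfalso
        have hder : HasDerivAt (fun s => z_f s + δ * Real.exp s)
            ((1 / ε) * (z_s c - (z_s c + 1) * z_f c) + δ * Real.exp c) c :=
          (hzf c hcIcc).add ((Real.hasDerivAt_exp c).const_mul δ)
        have hd := left_min_deriv_nonpos h0c' hder (by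
          intro s hs0 hsc
          have := (hlt s hs0.le hsc).2.1
          have hfc : z_f c + δ * Real.exp c = 0 := by linarith
          simp only [hfc]; linarith)
        set E := δ * Real.exp c with hE
        have hzc : z_f c = -E := by linarith
        have hεd : ε * ((1 / ε) * (z_s c - (z_s c + 1) * z_f c) + E) ≤ 0 :=
          mul_nonpos_iff.2 (Or.inl ⟨hε.le, hd⟩)
        have hrw : ε * ((1 / ε) * (z_s c - (z_s c + 1) * z_f c) + E)
            = (z_s c - (z_s c + 1) * z_f c) + ε * E := by
          field_simp
        rw [hrw] at hεd
        nlinarith [mul_nonneg (by linarith : (0:ℝ) ≤ z_s c + E) (by linarith : (0:ℝ) ≤ E)]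
      have s3 : z_f c < 1 + δ * Real.exp c := by
        rcases lt_or_eq_of_le ns3 with h | h
        · exact h
        exfalso
        have hder : HasDerivAt (fun s => 1 + δ * Real.exp s - z_f s)
            (δ * Real.exp c - (1 / ε) * (z_s c - (z_s c + 1) * z_f c)) c := by
          have h1 : HasDerivAt (fun s => 1 + δ * Real.exp s)
              (δ * Real.exp c) c := by
            exact ((Real.hasDerivAt_exp c).const_mul δ).const_add 1
          exact h1.sub (hzf c hcIcc)
        have hd := left_min_deriv_nonpos h0c' hder (by
          intro s hs0 hsc
          have := (hlt s hs0.le hsc).2.2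
          have hfc : 1 + δ * Real.exp c - z_f c = 0 := by linarith
          simp only [hfc]; linarith)
        set E := δ * Real.exp c with hE
        have hzc : z_f c = 1 + E := by linarith
        have hεd : ε * ((1 / ε) * (z_s c - (z_s c + 1) * z_f c) - E) ≥ 0 := by
          have : (1 / ε) * (z_s c - (z_s c + 1) * z_f c) - E ≥ 0 := by linarith
          positivity
        have hrw : ε * ((1 / ε) * (z_s c - (z_s c + 1) * z_f c) - E)
            = (z_s c - (z_s c + 1) * z_f c) - ε * E := by
          field_simp
        rw [hrw] at hεd
        nlinarith [mul_nonneg (by linarith : (0:ℝ) ≤ z_s c + E) (by linarith : (0:ℝ) ≤ E)]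
      exact ⟨s1, s2, s3⟩
    have hcS : c ∈ S := by
      refine ⟨hcIcc, ?_⟩
      intro s hs
      rcases lt_or_eq_of_le hs.2 with h | h
      · exact hlt s hs.1 h
      · rwa [h]
    -- show c = T
    have hcT' : c = T := by
      by_contra hne
      have hcltT : c < T := lt_of_le_of_ne hcT hne
      -- continuity gives an open neighborhood where P holds
      have ctzs : ContinuousAt z_s c := (hzs c hcIcc).continuousAt
      have ctzf : ContinuousAt z_f c := (hzf c hcIcc).continuousAt
      have ctE : ContinuousAt (fun s => δ * Real.exp s) c :=
        (Real.continuous_exp.continuousAt).const_smul δ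
      have e1 : ∀ᶠ s in 𝓝 c, 0 < z_s s + δ * Real.exp s := by
        have : (0:ℝ) < z_s c + δ * Real.exp c := by have := hPc.1; linarith
        exact ((ctzs.add ctE).tendsto).eventually (eventually_gt_nhds this)
      have e2 : ∀ᶠ s in 𝓝 c, 0 < z_f s + δ * Real.exp s := by
        have : (0:ℝ) < z_f c + δ * Real.exp c := by have := hPc.2.1; linarith
        exact ((ctzf.add ctE).tendsto).eventually (eventually_gt_nhds this)
      have e3 : ∀ᶠ s in 𝓝 c, 0 < 1 + δ * Real.exp s - z_f s := by
        have : (0:ℝ) < 1 + δ * Real.exp c - z_f c := by have := hPc.2.2; linarith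
        exact (((continuousAt_const.add ctE).sub ctzf).tendsto).eventually
          (eventually_gt_nhds this)
      obtain ⟨η, hη, hball⟩ := Metric.eventually_nhds_iff.mp ((e1.and e2).and e3)
      set t' := min T (c + η/2) with ht'
      have hct' : c < t' := lt_min hcltT (by linarith)
      have ht'S : t' ∈ S := by
        refine ⟨⟨le_trans h0c hct'.le, min_le_left _ _⟩, ?_⟩
        intro s hs
        rcases le_or_gt s c with h | h
        · exact hcS.2 s ⟨hs.1, h⟩
        · have hd : dist s c < η := by
            rw [Real.dist_eq, abs_of_pos (by linarith : (0:ℝ) < s - c)]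
            have : s ≤ c + η/2 := le_trans hs.2 (min_le_right _ _)
            linarith
          obtain ⟨⟨a1, a2⟩, a3⟩ := hball hd
          exact ⟨by linarith, by linarith, by linarith⟩
      have := le_csSup hSbdd ht'S
      rw [← hc] at this
      linarith
    intro t ht
    rw [← hcT'] at ht
    exact hcS.2 t ht
  -- conclude: pass to the limit δ → 0
  intro t ht
  have hexpt : (0:ℝ) < Real.exp t := Real.exp_pos t
  have hexple : Real.exp t ≤ Real.exp T := Real.exp_le_exp.2 ht.2
  have gen : ∀ c : ℝ, 0 < c →
      (-c ≤ z_s t ∧ -c ≤ z_f t ∧ z_f t ≤ 1 + c) := by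
    intro c hcpos
    set δ := min (c / Real.exp T) (min ε (1/2) / (2 * Real.exp T)) with hδdef
    have hδpos : 0 < δ := lt_min (by positivity) (by positivity)
    have hδT : δ * Real.exp T < min ε (1/2) := by
      have h := min_le_right (c / Real.exp T) (min ε (1/2) / (2 * Real.exp T))
      have : δ * Real.exp T ≤ (min ε (1/2) / (2 * Real.exp T)) * Real.exp T :=
        mul_le_mul_of_nonneg_right h hexpT.le
      have heq : (min ε (1/2) / (2 * Real.exp T)) * Real.exp T = min ε (1/2) / 2 := by
        field_simp
      rw [heq] at this
      linarith
    have hδc : δ * Real.exp t ≤ c := by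
      have h := min_le_left (c / Real.exp T) (min ε (1/2) / (2 * Real.exp T))
      have h2 : δ * Real.exp t ≤ δ * Real.exp T :=
        mul_le_mul_of_nonneg_left hexple hδpos.le
      have h3 : δ * Real.exp T ≤ (c / Real.exp T) * Real.exp T :=
        mul_le_mul_of_nonneg_right h hexpT.le
      have heq : (c / Real.exp T) * Real.exp T = c := by field_simp
      rw [heq] at h3
      linarith
    obtain ⟨k1, k2, k3⟩ := key δ hδpos hδT t ht
    exact ⟨by linarith, by linarith, by linarith⟩
  refine ⟨?_, ?_, ?_⟩
  · by_contra h
    push_neg at h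
    have := (gen (-z_s t / 2) (by linarith)).1
    linarith
  · by_contra h
    push_neg at h
    have := (gen (-z_f t / 2) (by linarith)).2.1
    linarith
  · by_contra h
    push_neg at h
    have := (gen ((z_f t - 1) / 2) (by linarith)).2.2
    linarith
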